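/- Let n ≥ 1 and let F : ({0,1})^n → {0,1} be monotone, meaning that if s_i ≤ t_i for all i then F(s) ≤ F(t). For p ∈ [0,1] define f(p) = Σ_{s : F(s)=1} p^{|s|} (1−p)^{n−|s|}, where |s| = #{i : s_i = 1}. If p ∈ (0, 1/2] and f(p) > p, then f(p) + f(1−p) > 1. -/

import Mathlib

/-- The probability that the Boolean function `F` equals `1` when each of the `n` input bits
is independently `1` with probability `p`. -/
noncomputable def boolAvg (n : ℕ) (F : (Fin n → Bool) → Bool) (p : ℝ) : ℝ :=
  ∑ s : Fin n → Bool, if F s then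
    p ^ (Finset.univ.filter fun i => s i = true).card *
      (1 - p) ^ (n - (Finset.univ.filter fun i => s i = true).card)
  else 0


open Finset

lemma card_filter_cons {n : ℕ} (b : Bool) (s : Fin n → Bool) :
    (Finset.univ.filter fun i => (Fin.cons b s : Fin (n+1) → Bool) i = true).card
      = (if b then 1 else 0) + (Finset.univ.filter fun i => s i = true).card := by
  rw [Finset.card_filter, Finset.card_filter, Fin.sum_univ_succ]
  simp [Fin.cons_succ, Fin.cons_zero]

lemma card_filter_le {n : ℕ} (s : Fin n → Bool) :
    (Finset.univ.filter fun i => s i = true).card ≤ n := by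
  refine le_trans (Finset.card_filter_le _ _) (by simp)

lemma boolAvg_succ (n : ℕ) (F : (Fin (n+1) → Bool) → Bool) (x : ℝ) :
    boolAvg (n+1) F x
      = (1-x) * boolAvg n (fun s => F (Fin.cons false s)) x
        + x * boolAvg n (fun s => F (Fin.cons true s)) x := by
  unfold boolAvg
  rw [Finset.mul_sum, Finset.mul_sum, ← Finset.sum_add_distrib,
    ← Equiv.sum_comp (Fin.consEquiv (fun _ => Bool)) _, Fintype.sum_prod_type,
    Fintype.sum_bool]
  rw [← Finset.sum_add_distrib]
  refine Finset.sum_congr rfl (fun s _ => ?_)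
  have hk := card_filter_le s
  set k := (Finset.univ.filter fun i => s i = true).card with hkdef
  have hct : (Finset.univ.filter fun i => (Fin.cons true s : Fin (n+1) → Bool) i = true).card = k + 1 := by
    rw [card_filter_cons]; simp [Nat.add_comm, ← hkdef]
  have hcf : (Finset.univ.filter fun i => (Fin.cons false s : Fin (n+1) → Bool) i = true).card = k := by
    rw [card_filter_cons]; simp [← hkdef]
  have e1 : (Fin.consEquiv (fun _ => Bool)) (true, s) = Fin.cons true s := rfl
  have e2 : (Fin.consEquiv (fun _ => Bool)) (false, s) = Fin.cons false s := rfl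
  rw [e1, e2, hct, hcf]
  have h1 : n + 1 - (k + 1) = n - k := by omega
  have h2 : n + 1 - k = (n - k) + 1 := by omega
  rw [h1, h2]
  cases hF1 : F (Fin.cons true s) <;> cases hF0 : F (Fin.cons false s) <;>
    simp [hF1, hF0] <;> ring

lemma boolAvg_zero (F : (Fin 0 → Bool) → Bool) (x : ℝ) :
    boolAvg 0 F x = if F (fun i => i.elim0) then 1 else 0 := by
  unfold boolAvg
  rw [Fintype.sum_unique, congrArg F (Subsingleton.elim _ (fun i => i.elim0))]
  simp

lemma boolAvg_nonneg (n : ℕ) (F : (Fin n → Bool) → Bool) {x : ℝ}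
    (hx0 : 0 ≤ x) (hx1 : x ≤ 1) : 0 ≤ boolAvg n F x := by
  unfold boolAvg
  refine Finset.sum_nonneg (fun s _ => ?_)
  split
  · exact mul_nonneg (pow_nonneg hx0 _) (pow_nonneg (by linarith) _)
  · exact le_rfl

lemma boolAvg_le_boolAvg (n : ℕ) {F G : (Fin n → Bool) → Bool}
    (hFG : ∀ s, F s = true → G s = true) {x : ℝ} (hx0 : 0 ≤ x) (hx1 : x ≤ 1) :
    boolAvg n F x ≤ boolAvg n G x := by
  unfold boolAvg
  refine Finset.sum_le_sum (fun s _ => ?_)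
  by_cases hF : F s = true
  · rw [if_pos hF, if_pos (hFG s hF)]
  · rw [if_neg hF]
    split
    · exact mul_nonneg (pow_nonneg hx0 _) (pow_nonneg (by linarith) _)
    · exact le_rfl

lemma boolAvg_true (n : ℕ) (x : ℝ) : boolAvg n (fun _ => true) x = 1 := by
  induction n with
  | zero => rw [boolAvg_zero]; simp
  | succ n ih =>
      rw [boolAvg_succ]
      show (1-x) * boolAvg n (fun _ => true) x + x * boolAvg n (fun _ => true) x = 1
      rw [ih]; ring

lemma boolAvg_le_one (n : ℕ) (F : (Fin n → Bool) → Bool) {x : ℝ}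
    (hx0 : 0 ≤ x) (hx1 : x ≤ 1) : boolAvg n F x ≤ 1 := by
  have h := boolAvg_le_boolAvg n (F := F) (G := fun _ => true)
    (fun s _ => rfl) hx0 hx1
  rwa [boolAvg_true] at h

lemma boolAvg_differentiable (n : ℕ) (F : (Fin n → Bool) → Bool) :
    Differentiable ℝ (boolAvg n F) := by
  unfold boolAvg
  apply Differentiable.fun_sum
  intro s _
  by_cases hF : F s = true
  · have he : (fun y : ℝ => if F s = true then
        y ^ (Finset.univ.filter fun i => s i = true).card *
          (1 - y) ^ (n - (Finset.univ.filter fun i => s i = true).card) else 0)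
        = fun y : ℝ => y ^ (Finset.univ.filter fun i => s i = true).card *
          (1 - y) ^ (n - (Finset.univ.filter fun i => s i = true).card) := by
      funext y; rw [if_pos hF]
    rw [he]
    exact (differentiable_pow _).mul
      (((differentiable_const (1:ℝ)).sub differentiable_id).pow _)
  · have he : (fun y : ℝ => if F s = true then
        y ^ (Finset.univ.filter fun i => s i = true).card *
          (1 - y) ^ (n - (Finset.univ.filter fun i => s i = true).card) else 0)
        = fun _ : ℝ => (0:ℝ) := by
      funext y; rw [if_neg hF]
    rw [he]
    exact differentiable_const 0

lemma boolAvg_deriv_key : ∀ (n : ℕ) (F : (Fin n → Bool) → Bool),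
    (∀ s t : Fin n → Bool, (∀ i, s i ≤ t i) → F s ≤ F t) →
    ∀ x : ℝ, 0 ≤ x → x ≤ 1 →
    boolAvg n F x * (1 - boolAvg n F x) ≤ x * (1-x) * deriv (boolAvg n F) x := by
  intro n
  induction n with
  | zero =>
      intro F _ x hx0 hx1
      have h : boolAvg 0 F = fun _ : ℝ => if F (fun i => i.elim0) then (1:ℝ) else 0 :=
        funext (boolAvg_zero F)
      rw [h, deriv_const]
      cases hF : F (fun i => i.elim0) <;> simp [hF]
  | succ n ih =>
      intro F hmono x hx0 hx1
      set F0 : (Fin n → Bool) → Bool := fun s => F (Fin.cons false s) with hF0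
      set F1 : (Fin n → Bool) → Bool := fun s => F (Fin.cons true s) with hF1
      have hm0 : ∀ s t : Fin n → Bool, (∀ i, s i ≤ t i) → F0 s ≤ F0 t :=
        fun s t hst => hmono _ _ (fun i => Fin.cases (le_refl false) hst i)
      have hm1 : ∀ s t : Fin n → Bool, (∀ i, s i ≤ t i) → F1 s ≤ F1 t :=
        fun s t hst => hmono _ _ (fun i => Fin.cases (le_refl true) hst i)
      have h01 : ∀ s, F0 s ≤ F1 s :=
        fun s => hmono _ _ (fun i => Fin.cases (Bool.false_le _) (fun j => le_refl _) i)
      have hd : boolAvg (n+1) F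
          = fun y => (1-y) * boolAvg n F0 y + y * boolAvg n F1 y :=
        funext (fun y => boolAvg_succ n F y)
      have hA : HasDerivAt (boolAvg n F0) (deriv (boolAvg n F0) x) x :=
        ((boolAvg_differentiable n F0) x).hasDerivAt
      have hB : HasDerivAt (boolAvg n F1) (deriv (boolAvg n F1) x) x :=
        ((boolAvg_differentiable n F1) x).hasDerivAt
      have hder : HasDerivAt (fun y => (1-y) * boolAvg n F0 y + y * boolAvg n F1 y)
          (((-1) * boolAvg n F0 x + (1-x) * deriv (boolAvg n F0) x)
            + (1 * boolAvg n F1 x + x * deriv (boolAvg n F1) x)) x :=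
        ((((hasDerivAt_id x).const_sub 1).mul hA).add ((hasDerivAt_id x).mul hB))
      rw [hd, hder.deriv]
      have ihA := ih F0 hm0 x hx0 hx1
      have ihB := ih F1 hm1 x hx0 hx1
      have h01' : ∀ s, F0 s = true → F1 s = true := by
        intro s h
        cases h1 : F1 s
        · exfalso
          have := h01 s
          rw [h, h1] at this
          exact absurd this (by decide)
        · rfl
      have hAB : boolAvg n F0 x ≤ boolAvg n F1 x := boolAvg_le_boolAvg n h01' hx0 hx1
      have hA0 : 0 ≤ boolAvg n F0 x := boolAvg_nonneg n F0 hx0 hx1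
      have hB1 : boolAvg n F1 x ≤ 1 := boolAvg_le_one n F1 hx0 hx1
      set A := boolAvg n F0 x
      set B := boolAvg n F1 x
      set A' := deriv (boolAvg n F0) x
      set B' := deriv (boolAvg n F1) x
      have h1 : 0 ≤ (1-x) * (x*(1-x)*A' - A*(1-A)) :=
        mul_nonneg (by linarith) (by linarith)
      have h2 : 0 ≤ x * (x*(1-x)*B' - B*(1-B)) :=
        mul_nonneg hx0 (by linarith)
      have h3 : 0 ≤ x*(1-x)*((B-A)*(1-(B-A))) :=
        mul_nonneg (mul_nonneg hx0 (by linarith))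
          (mul_nonneg (by linarith) (by linarith))
      beta_reduce
      nlinarith [h1, h2, h3]

lemma boolAvg_monotoneOn (n : ℕ) (F : (Fin n → Bool) → Bool)
    (hmono : ∀ s t : Fin n → Bool, (∀ i, s i ≤ t i) → F s ≤ F t) :
    MonotoneOn (boolAvg n F) (Set.Icc 0 1) := by
  apply monotoneOn_of_deriv_nonneg (convex_Icc 0 1)
  · exact (boolAvg_differentiable n F).continuous.continuousOn
  · exact (boolAvg_differentiable n F).differentiableOn
  · intro x hx
    rw [interior_Icc] at hx
    have key := boolAvg_deriv_key n F hmono x (le_of_lt hx.1) (le_of_lt hx.2)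
    have h0 : 0 ≤ boolAvg n F x := boolAvg_nonneg n F (le_of_lt hx.1) (le_of_lt hx.2)
    have h1 : boolAvg n F x ≤ 1 := boolAvg_le_one n F (le_of_lt hx.1) (le_of_lt hx.2)
    nlinarith [key, h0, h1, mul_pos hx.1 (show (0:ℝ) < 1 - x by linarith [hx.2])]

theorem stmt18 (n : ℕ) (hn : 1 ≤ n) (F : (Fin n → Bool) → Bool)
    (hmono : ∀ s t : Fin n → Bool, (∀ i, s i ≤ t i) → F s ≤ F t)
    (p : ℝ) (hp0 : 0 < p) (hp2 : p ≤ 1 / 2) (hfp : p < boolAvg n F p) :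
    1 < boolAvg n F p + boolAvg n F (1 - p) := by
  set f := boolAvg n F with hfdef
  set q : ℝ := 1 - p with hq
  have hp1 : p < 1 := by linarith
  have hq0 : 0 < q := by rw [hq]; linarith
  have hq1 : q < 1 := by rw [hq]; linarith
  have hpq : p ≤ q := by rw [hq]; linarith
  have hmonoOn := boolAvg_monotoneOn n F hmono
  have hpmem : p ∈ Set.Icc (0:ℝ) 1 := ⟨le_of_lt hp0, le_of_lt hp1⟩
  have hqmem : q ∈ Set.Icc (0:ℝ) 1 := ⟨le_of_lt hq0, le_of_lt hq1⟩
  have hfq_le1 : f q ≤ 1 := boolAvg_le_one n F (le_of_lt hq0) (le_of_lt hq1)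
  have hfp_le_fq : f p ≤ f q := hmonoOn hpmem hqmem hpq
  have hfp_pos : 0 < f p := lt_trans hp0 hfp
  by_cases hfq1 : f q = 1
  · rw [hfq1]; linarith
  have hfq_lt1 : f q < 1 := lt_of_le_of_ne hfq_le1 hfq1
  -- all values of f on [p,q] lie in (0,1)
  have hmem : ∀ y ∈ Set.Icc p q, 0 < y ∧ y < 1 ∧ 0 < f y ∧ f y < 1 := by
    intro y hy
    have hy0 : 0 < y := lt_of_lt_of_le hp0 hy.1
    have hy1 : y < 1 := lt_of_le_of_lt hy.2 hq1
    have hymem : y ∈ Set.Icc (0:ℝ) 1 := ⟨le_of_lt hy0, le_of_lt hy1⟩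
    exact ⟨hy0, hy1, lt_of_lt_of_le hfp_pos (hmonoOn hpmem hymem hy.1),
      lt_of_le_of_lt (hmonoOn hymem hqmem hy.2) hfq_lt1⟩
  set g : ℝ → ℝ := fun y =>
    Real.log (f y) - Real.log (1 - f y) - Real.log y + Real.log (1 - y) with hg
  have hgd : ∀ y ∈ Set.Icc p q, HasDerivAt g
      ((f y)⁻¹ * deriv f y - (1 - f y)⁻¹ * (-(deriv f y)) - y⁻¹ + (1-y)⁻¹ * (-1)) y := by
    intro y hy
    obtain ⟨hy0, hy1, hfy0, hfy1⟩ := hmem y hy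
    have hfd : HasDerivAt f (deriv f y) y := ((boolAvg_differentiable n F) y).hasDerivAt
    have h1 : HasDerivAt (fun z => Real.log (f z)) ((f y)⁻¹ * deriv f y) y :=
      (Real.hasDerivAt_log (ne_of_gt hfy0)).comp y hfd
    have h2 : HasDerivAt (fun z => Real.log (1 - f z)) ((1 - f y)⁻¹ * (-(deriv f y))) y :=
      (Real.hasDerivAt_log (ne_of_gt (by linarith))).comp y (hfd.const_sub 1)
    have h3 : HasDerivAt (fun z => Real.log z) (y⁻¹) y :=
      Real.hasDerivAt_log (ne_of_gt hy0)
    have h4 : HasDerivAt (fun z : ℝ => Real.log (1 - z)) ((1-y)⁻¹ * (-1)) y :=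
      (Real.hasDerivAt_log (ne_of_gt (by linarith))).comp y ((hasDerivAt_id y).const_sub 1)
    exact ((h1.sub h2).sub h3).add h4
  have hgmono : MonotoneOn g (Set.Icc p q) := by
    apply monotoneOn_of_deriv_nonneg (convex_Icc p q)
    · intro y hy
      exact ((hgd y hy).differentiableAt.continuousAt).continuousWithinAt
    · intro y hy
      rw [interior_Icc] at hy
      exact ((hgd y ⟨le_of_lt hy.1, le_of_lt hy.2⟩).differentiableAt).differentiableWithinAt
    · intro y hy
      rw [interior_Icc] at hy
      have hy' : y ∈ Set.Icc p q := ⟨le_of_lt hy.1, le_of_lt hy.2⟩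
      rw [(hgd y hy').deriv]
      obtain ⟨hy0, hy1, hfy0, hfy1⟩ := hmem y hy'
      have key := boolAvg_deriv_key n F hmono y (le_of_lt hy0) (le_of_lt hy1)
      set d := deriv f y
      have hne1 : f y ≠ 0 := ne_of_gt hfy0
      have hne2 : (1:ℝ) - f y ≠ 0 := ne_of_gt (by linarith)
      have hne3 : y ≠ 0 := ne_of_gt hy0
      have hne4 : (1:ℝ) - y ≠ 0 := ne_of_gt (by linarith)
      have he : (f y)⁻¹ * d - (1 - f y)⁻¹ * (-d) - y⁻¹ + (1-y)⁻¹ * (-1)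
          = (y*(1-y)*d - f y*(1 - f y)) / (f y * (1 - f y) * (y*(1-y))) := by
        field_simp
        ring
      rw [he]
      apply div_nonneg
      · nlinarith [key]
      · have hpos : 0 < f y * (1 - f y) * (y*(1-y)) :=
          mul_pos (mul_pos hfy0 (by linarith)) (mul_pos hy0 (by linarith))
        exact le_of_lt hpos
  have hgp : 0 < g p := by
    have hl1 : Real.log p < Real.log (f p) := Real.log_lt_log hp0 hfp
    have hl2 : Real.log (1 - f p) < Real.log (1 - p) := by
      apply Real.log_lt_log
      · obtain ⟨_, _, _, hfp1⟩ := hmem p ⟨le_refl p, hpq⟩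
        linarith
      · linarith
    simp only [hg]
    linarith
  have hgq : 0 < g q := lt_of_lt_of_le hgp (hgmono ⟨le_refl p, hpq⟩ ⟨hpq, le_refl q⟩ hpq)
  -- from g q > 0 deduce f q > q
  have hfq_gt : q < f q := by
    by_contra hcon
    push_neg at hcon
    obtain ⟨_, _, hfq0, hfq1⟩ := hmem q ⟨hpq, le_refl q⟩
    have hl1 : Real.log (f q) ≤ Real.log q := Real.log_le_log hfq0 hcon
    have hl2 : Real.log (1 - q) ≤ Real.log (1 - f q) := by
      apply Real.log_le_log (by linarith)
      linarith
    simp only [hg] at hgq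
    linarith
  have : f p + f q > p + q := by linarith
  rw [hq] at this
  linarith
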